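/- Let C ⊆ V be independent in G. For x ∈ V, let N_C(x) = {y ∈ C : y ∼ x} and f_C^x the uniform distribution on N_C(x) ∪ {x}. Then the strong mode polytope S(G,C) = {p ∈ Δ(V) : p_x ≥ Σ_{y∼x} p_y for all x ∈ C} is a (|V|-1)-simplex whose vertices are exactly the f_C^x, x ∈ V. -/

import Mathlib

/-- The polytope of strong `C`-modes of a graph `G`, inside the probability
simplex. -/
def strongModePolytope {V : Type*} [Fintype V] (G : SimpleGraph V)
    [DecidableRel G.Adj] (C : Set V) : Set (V → ℝ) :=
  {p | (∀ v, 0 ≤ p v) ∧ (∑ v, p v = 1) ∧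
    ∀ x ∈ C, ∑ y ∈ G.neighborFinset x, p y ≤ p x}

/-- The uniform probability distribution on a finite subset. -/
noncomputable def uniformOn {V : Type*} [DecidableEq V] (s : Finset V) : V → ℝ :=
  fun v => if v ∈ s then (s.card : ℝ)⁻¹ else 0

section Aux

variable {V : Type*} [Fintype V] [DecidableEq V] (G : SimpleGraph V)
  [DecidableRel G.Adj] (C : Finset V)

/-- `N_C(x) ∪ {x}`. -/
def smpSupp (x : V) : Finset V := insert x (C.filter fun y => G.Adj y x)

lemma mem_smpSupp {v x : V} : v ∈ smpSupp G C x ↔ v = x ∨ (v ∈ C ∧ G.Adj v x) := by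
  simp [smpSupp]

lemma smpSupp_card_pos (x : V) : 0 < (smpSupp G C x).card :=
  Finset.card_pos.2 ⟨x, Finset.mem_insert_self _ _⟩

lemma smpSupp_card_ne (x : V) : ((smpSupp G C x).card : ℝ) ≠ 0 := by
  exact_mod_cast (smpSupp_card_pos G C x).ne'

lemma smpSupp_of_mem (hInd : ∀ x ∈ C, ∀ y ∈ C, ¬ G.Adj x y) {x : V} (hx : x ∈ C) :
    smpSupp G C x = {x} := by
  unfold smpSupp
  rw [Finset.filter_false_of_mem (fun y hy => hInd y hy x hx)]
  simp

lemma uniformOn_nonneg (s : Finset V) (v : V) : 0 ≤ uniformOn s v := by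
  unfold uniformOn
  split <;> positivity

lemma sum_uniformOn (s : Finset V) (hs : s.Nonempty) : ∑ v, uniformOn s v = 1 := by
  unfold uniformOn
  rw [Finset.sum_ite_mem, Finset.univ_inter, Finset.sum_const, nsmul_eq_mul,
    mul_inv_cancel₀]
  exact_mod_cast (Finset.card_pos.2 hs).ne'

/-- The linear map sending `λ` to `∑ z, λ z • f_C^z`. -/
noncomputable def smpM : (V → ℝ) →ₗ[ℝ] (V → ℝ) where
  toFun l := fun x => ∑ z, l z * uniformOn (smpSupp G C z) x
  map_add' a b := by
    funext x
    simp [add_mul, Finset.sum_add_distrib]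
  map_smul' c a := by
    funext x
    simp [Finset.mul_sum, mul_assoc]

/-- The inverse linear map, recovering the barycentric coordinates. -/
noncomputable def smpL : (V → ℝ) →ₗ[ℝ] (V → ℝ) where
  toFun p := fun x => if x ∈ C then p x - ∑ y ∈ G.neighborFinset x, p y
    else ((smpSupp G C x).card : ℝ) * p x
  map_add' a b := by
    funext x
    by_cases h : x ∈ C <;> simp [h, Finset.sum_add_distrib] <;> ring
  map_smul' c a := by
    funext x
    by_cases h : x ∈ C <;> simp only [h, if_true, if_false, Finset.mul_sum,
      RingHom.id_apply, Pi.smul_apply, smul_eq_mul, mul_sub] <;> ring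

lemma smpM_apply (l : V → ℝ) (x : V) :
    smpM G C l x = ∑ z, l z * uniformOn (smpSupp G C z) x := rfl

lemma smpL_apply_mem (p : V → ℝ) {x : V} (hx : x ∈ C) :
    smpL G C p x = p x - ∑ y ∈ G.neighborFinset x, p y := by
  simp [smpL, hx]

lemma smpL_apply_not_mem (p : V → ℝ) {x : V} (hx : x ∉ C) :
    smpL G C p x = ((smpSupp G C x).card : ℝ) * p x := by
  simp [smpL, hx]

lemma smpM_apply_not_mem (l : V → ℝ) {x : V} (hx : x ∉ C) :
    smpM G C l x = l x * ((smpSupp G C x).card : ℝ)⁻¹ := by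
  rw [smpM_apply, Finset.sum_eq_single x]
  · rw [uniformOn, if_pos ((mem_smpSupp G C).2 (Or.inl rfl))]
  · intro z _ hz
    rw [uniformOn, if_neg, mul_zero]
    intro hmem
    rcases (mem_smpSupp G C).1 hmem with h | h
    · exact hz h.symm
    · exact hx h.1
  · intro h
    exact absurd (Finset.mem_univ x) h

lemma smpM_apply_mem (hInd : ∀ x ∈ C, ∀ y ∈ C, ¬ G.Adj x y) (l : V → ℝ) {x : V}
    (hx : x ∈ C) :
    smpM G C l x = l x + ∑ z ∈ G.neighborFinset x, l z * ((smpSupp G C z).card : ℝ)⁻¹ := by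
  have hsub : ∑ z ∈ insert x (G.neighborFinset x), l z * uniformOn (smpSupp G C z) x
      = ∑ z, l z * uniformOn (smpSupp G C z) x := by
    refine Finset.sum_subset (Finset.subset_univ _) fun z _ hz => ?_
    rw [uniformOn, if_neg, mul_zero]
    intro hmem
    rcases (mem_smpSupp G C).1 hmem with h | h
    · exact hz (by rw [← h]; exact Finset.mem_insert_self _ _)
    · exact hz (Finset.mem_insert.2 (Or.inr ((SimpleGraph.mem_neighborFinset G x z).2 h.2)))
  rw [smpM_apply, ← hsub, Finset.sum_insert (by simp)]
  congr 1
  · rw [uniformOn, if_pos ((mem_smpSupp G C).2 (Or.inl rfl)),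
      smpSupp_of_mem G C hInd hx]
    simp
  · refine Finset.sum_congr rfl fun z hz => ?_
    rw [uniformOn, if_pos]
    exact (mem_smpSupp G C).2 (Or.inr ⟨hx, (SimpleGraph.mem_neighborFinset G x z).1 hz⟩)

lemma not_mem_of_adj (hInd : ∀ x ∈ C, ∀ y ∈ C, ¬ G.Adj x y) {x z : V} (hx : x ∈ C)
    (hz : G.Adj x z) : z ∉ C := fun hzC => hInd x hx z hzC hz

lemma smpL_smpM (hInd : ∀ x ∈ C, ∀ y ∈ C, ¬ G.Adj x y) (l : V → ℝ) :
    smpL G C (smpM G C l) = l := by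
  funext x
  by_cases hx : x ∈ C
  · rw [smpL_apply_mem G C _ hx, smpM_apply_mem G C hInd l hx,
      Finset.sum_congr rfl (fun y hy => smpM_apply_not_mem G C l
        (not_mem_of_adj G C hInd hx ((SimpleGraph.mem_neighborFinset G x y).1 hy)))]
    ring
  · rw [smpL_apply_not_mem G C _ hx, smpM_apply_not_mem G C l hx, mul_comm,
      mul_assoc, inv_mul_cancel₀ (smpSupp_card_ne G C x), mul_one]

lemma smpM_smpL (hInd : ∀ x ∈ C, ∀ y ∈ C, ¬ G.Adj x y) (p : V → ℝ) :
    smpM G C (smpL G C p) = p := by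
  funext x
  by_cases hx : x ∈ C
  · have hz' : ∀ z ∈ G.neighborFinset x,
        smpL G C p z * ((smpSupp G C z).card : ℝ)⁻¹ = p z := by
      intro z hz
      rw [smpL_apply_not_mem G C p
        (not_mem_of_adj G C hInd hx ((SimpleGraph.mem_neighborFinset G x z).1 hz)),
        mul_right_comm, mul_inv_cancel₀ (smpSupp_card_ne G C z), one_mul]
    rw [smpM_apply_mem G C hInd _ hx, Finset.sum_congr rfl hz', smpL_apply_mem G C _ hx]
    ring
  · rw [smpM_apply_not_mem G C _ hx, smpL_apply_not_mem G C p hx, mul_comm,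
      ← mul_assoc, inv_mul_cancel₀ (smpSupp_card_ne G C x), one_mul]

lemma sum_smpM (l : V → ℝ) : ∑ x, smpM G C l x = ∑ z, l z := by
  simp only [smpM_apply]
  rw [Finset.sum_comm]
  refine Finset.sum_congr rfl fun z _ => ?_
  rw [← Finset.mul_sum, sum_uniformOn _ ⟨z, (mem_smpSupp G C).2 (Or.inl rfl)⟩, mul_one]

lemma stdSimplex_basis_mem_extremePoints {ι : Type*} [Fintype ι] [DecidableEq ι] (i : ι) :
    (fun j => if i = j then (1 : ℝ) else 0) ∈ (stdSimplex ℝ ι).extremePoints ℝ := by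
  constructor
  · exact ite_eq_mem_stdSimplex ℝ i
  · intro x hx y hy hseg
    obtain ⟨a, c, ha, hc, hac, heq⟩ := hseg
    have hkey : ∀ z : ι → ℝ, z ∈ stdSimplex ℝ ι → (∀ j, j ≠ i → z j = 0) →
        z = fun j => if i = j then (1 : ℝ) else 0 := by
      intro z hz hz0
      funext j
      by_cases hji : j = i
      · subst hji
        have h1 := hz.2
        rw [Finset.sum_eq_single j (fun b _ hb => hz0 b hb)
          (fun h => absurd (Finset.mem_univ j) h)] at h1
        rw [if_pos rfl, h1]
      · rw [if_neg (fun h => hji h.symm), hz0 j hji]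
    have hzero : ∀ j, j ≠ i → x j = 0 ∧ y j = 0 := by
      intro j hj
      have h0 := congr_fun heq j
      simp only [Pi.add_apply, Pi.smul_apply, smul_eq_mul] at h0
      rw [if_neg (fun h => hj h.symm)] at h0
      have hx0 := mul_nonneg ha.le (hx.1 j)
      have hy0 := mul_nonneg hc.le (hy.1 j)
      have hax : a * x j = 0 := by linarith
      have hcy : c * y j = 0 := by linarith
      exact ⟨(mul_eq_zero.1 hax).resolve_left ha.ne',
        (mul_eq_zero.1 hcy).resolve_left hc.ne'⟩
    exact hkey x hx fun j hj => (hzero j hj).1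

end Aux

/-- For an independent `C`, the strong mode polytope `S(G,C)` is a `(|V|-1)`-simplex
whose vertices are exactly the uniform distributions `f_C^x` on `N_C(x) ∪ {x}`,
`x ∈ V`. -/
theorem strongModePolytope_is_simplex {V : Type*} [Fintype V] [DecidableEq V]
    (G : SimpleGraph V) [DecidableRel G.Adj] (C : Finset V)
    (hInd : ∀ x ∈ C, ∀ y ∈ C, ¬ G.Adj x y)
    (f : V → V → ℝ)
    (hf : ∀ x, f x = uniformOn (insert x (C.filter fun y => G.Adj y x))) :
    AffineIndependent ℝ f ∧
      strongModePolytope G ↑C = convexHull ℝ (Set.range f) ∧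
      (strongModePolytope G ↑C).extremePoints ℝ = Set.range f := by
  classical
  set b : V → V → ℝ := fun i j => if i = j then (1 : ℝ) else 0 with hb
  -- `f` is the image of the standard basis under `smpM`
  have hfM : f = ⇑(smpM G C) ∘ b := by
    funext x
    rw [hf x]
    show uniformOn (smpSupp G C x) = smpM G C (b x)
    funext v
    rw [smpM_apply, Finset.sum_eq_single x
      (fun z _ hz => by simp [hb, Ne.symm hz])
      (fun h => absurd (Finset.mem_univ x) h)]
    simp [hb]
  have hinj : Function.Injective (smpM G C) :=
    Function.LeftInverse.injective (fun l => smpL_smpM G C hInd l)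
  -- affine independence of the standard basis
  have haffb : AffineIndependent ℝ b := by
    rw [affineIndependent_iff]
    intro s w hw h i hi
    have h2 := congr_fun h i
    simp only [Finset.sum_apply, Pi.smul_apply, smul_eq_mul, Pi.zero_apply, hb] at h2
    rwa [Finset.sum_eq_single i (fun z _ hz => by simp [hz])
      (fun h => absurd hi h), if_pos rfl, mul_one] at h2
  have haff : AffineIndependent ℝ f := by
    rw [hfM]
    exact haffb.map' (smpM G C).toAffineMap hinj
  -- the polytope is the image of the standard simplex
  have hset : strongModePolytope G ↑C = ⇑(smpM G C) '' stdSimplex ℝ V := by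
    ext p
    constructor
    · rintro ⟨h1, h2, h3⟩
      refine ⟨smpL G C p, ⟨fun x => ?_, ?_⟩, smpM_smpL G C hInd p⟩
      · by_cases hx : x ∈ C
        · rw [smpL_apply_mem G C p hx]
          exact sub_nonneg.2 (h3 x (Finset.mem_coe.2 hx))
        · rw [smpL_apply_not_mem G C p hx]
          exact mul_nonneg (Nat.cast_nonneg _) (h1 x)
      · calc ∑ x, smpL G C p x = ∑ x, smpM G C (smpL G C p) x := (sum_smpM G C _).symm
          _ = ∑ x, p x := by rw [smpM_smpL G C hInd p]
          _ = 1 := h2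
    · rintro ⟨l, ⟨hl1, hl2⟩, rfl⟩
      refine ⟨fun v => ?_, ?_, fun x hx => ?_⟩
      · rw [smpM_apply]
        exact Finset.sum_nonneg fun z _ => mul_nonneg (hl1 z) (uniformOn_nonneg _ v)
      · rw [sum_smpM]; exact hl2
      · have h := congr_fun (smpL_smpM G C hInd l) x
        rw [smpL_apply_mem G C _ (Finset.mem_coe.1 hx)] at h
        have := hl1 x
        linarith
  have hstd : convexHull ℝ (Set.range b) = stdSimplex ℝ V := by
    rw [← convexHull_basis_eq_stdSimplex (R := ℝ) (ι := V)]
  refine ⟨haff, ?_, ?_⟩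
  · rw [hset, hfM, Set.range_comp, ← LinearMap.image_convexHull, hstd]
  · -- extreme points
    let e : (V → ℝ) ≃ₗ[ℝ] (V → ℝ) :=
      LinearEquiv.ofLinear (smpM G C) (smpL G C)
        (LinearMap.ext (smpM_smpL G C hInd)) (LinearMap.ext (smpL_smpM G C hInd))
    have hecoe : ⇑e = ⇑(smpM G C) := rfl
    have hepstd : (stdSimplex ℝ V).extremePoints ℝ = Set.range b := by
      apply Set.Subset.antisymm
      · rw [← hstd]
        exact extremePoints_convexHull_subset
      · rintro _ ⟨i, rfl⟩
        simpa [hb] using stdSimplex_basis_mem_extremePoints (ι := V) i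
    calc (strongModePolytope G ↑C).extremePoints ℝ
        = (⇑e '' stdSimplex ℝ V).extremePoints ℝ := by rw [hset, hecoe]
      _ = ⇑e '' (stdSimplex ℝ V).extremePoints ℝ := (image_extremePoints e _).symm
      _ = Set.range f := by rw [hepstd, hecoe, hfM, Set.range_comp]
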